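/- Let S be an additively reduced and additively Furstenberg semidomain with A₊(S) = S^×, and let G be a linearly ordered torsion-free abelian group in which every bounded-below subset is well-ordered. Then every f ∈ S⟦G⟧ with |supp(f)| > 1 can be expressed as the sum of at most three irreducible elements of S⟦G⟧. -/

import Mathlib

/-- Witness that `S` is a semidomain: an injective semiring hom into an integral domain. -/
structure SemidomainWitness (S : Type*) [CommSemiring S] where
  D : Type
  [commRing : CommRing D]
  [isDomain : IsDomain D]
  emb : S →+* D
  inj : Function.Injective emb

/-- `S` is a semidomain, i.e. (isomorphic to) a subsemiring of an integral domain. -/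
def IsSemidomain (S : Type*) [CommSemiring S] : Prop := Nonempty (SemidomainWitness S)

/-- `S` is additively reduced: `0` is the only additively invertible element. -/
def AddReduced (S : Type*) [AddZeroClass S] : Prop := ∀ a b : S, a + b = 0 → a = 0

/-- `s` is an atom of the additive monoid `(S, +)` (for `S` additively reduced):
it is nonzero and cannot be written as a sum of two nonzero elements. -/
def IsAddAtom {S : Type*} [AddZeroClass S] (s : S) : Prop :=
  s ≠ 0 ∧ ∀ a b : S, s = a + b → a = 0 ∨ b = 0

/-- `S` is additively Furstenberg: every nonzero element is divisible in `(S, +)`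
by an additive atom. -/
def AddFurstenberg (S : Type*) [AddZeroClass S] : Prop :=
  ∀ s : S, s ≠ 0 → ∃ a t : S, IsAddAtom a ∧ s = a + t


section Series
variable {S : Type*} [CommSemiring S] {G : Type*} [AddCommGroup G] [LinearOrder G] [IsOrderedAddMonoid G]

/-- `f` belongs to the group series semidomain `S⟦G⟧`: its support is contained in the range
of a strictly increasing sequence of exponents, so `f` is a formal sum `∑_{i=0}^∞ s_i x^{g_i}`. -/
def InSeries (f : HahnSeries G S) : Prop :=
  ∃ g : ℕ → G, StrictMono g ∧ f.support ⊆ Set.range g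

/-- A monomial `s·x^g` in `S⟦G⟧`. -/
def IsMonomialSeries (f : HahnSeries G S) : Prop :=
  ∃ (g : G) (s : S), f = HahnSeries.single g s

/-- `f` is monolithic in `S⟦G⟧`: every factorization of `f` within `S⟦G⟧` has a
monomial factor. -/
def MonolithicSeries (f : HahnSeries G S) : Prop :=
  f ≠ 0 ∧ ∀ p q : HahnSeries G S, InSeries p → InSeries q → f = p * q →
    IsMonomialSeries p ∨ IsMonomialSeries q

/-- `f` is a unit of the semidomain `S⟦G⟧`. -/
def IsUnitSeries (f : HahnSeries G S) : Prop :=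
  InSeries f ∧ ∃ h : HahnSeries G S, InSeries h ∧ f * h = 1

/-- `f` is irreducible in the multiplicative monoid of nonzero elements of `S⟦G⟧`. -/
def IrreducibleSeries (f : HahnSeries G S) : Prop :=
  InSeries f ∧ f ≠ 0 ∧ ¬ IsUnitSeries f ∧
    ∀ p q : HahnSeries G S, InSeries p → InSeries q → f = p * q →
      IsUnitSeries p ∨ IsUnitSeries q

end Series

namespace WGS
open HahnSeries

variable {S : Type*} [CommSemiring S] {G : Type*} [AddCommGroup G] [LinearOrder G] [IsOrderedAddMonoid G]

lemma sum_ne_zero' (hred : AddReduced S) {ι : Type*} {s : Finset ι} {F : ι → S}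
    {i : ι} (hi : i ∈ s) (hFi : F i ≠ 0) : ∑ j ∈ s, F j ≠ 0 := by
  classical
  induction s using Finset.cons_induction with
  | empty => simp at hi
  | cons a s ha ih =>
    rw [Finset.sum_cons]
    intro h0
    rcases Finset.mem_cons.1 hi with rfl | hi'
    · exact hFi (hred _ _ h0)
    · exact ih hi' (hred _ _ (by rwa [add_comm] at h0))

lemma mul_ne_zero' (hS : IsSemidomain S) {a b : S} (ha : a ≠ 0) (hb : b ≠ 0) :
    a * b ≠ 0 := by
  obtain ⟨W⟩ := hS
  letI := W.commRing
  letI := W.isDomain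
  intro h
  have h2 : W.emb a * W.emb b = 0 := by rw [← map_mul, h, map_zero]
  rcases mul_eq_zero.1 h2 with h' | h'
  · exact ha (W.inj (h'.trans (map_zero W.emb).symm))
  · exact hb (W.inj (h'.trans (map_zero W.emb).symm))

lemma add_mem_support_mul (hS : IsSemidomain S) (hred : AddReduced S)
    {p q : HahnSeries G S} {a b : G} (ha : a ∈ p.support) (hb : b ∈ q.support) :
    a + b ∈ (p * q).support := by
  rw [HahnSeries.mem_support, HahnSeries.coeff_mul]
  refine sum_ne_zero' hred (i := ((a, b) : G × G)) ?_ ?_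
  · rw [Finset.mem_antidiagonal]; exact ⟨ha, hb, rfl⟩
  · exact mul_ne_zero' hS ((HahnSeries.mem_support _ _).1 ha) ((HahnSeries.mem_support _ _).1 hb)

lemma eq_single_of_support_subset {p : HahnSeries G S} {a : G} (h : p.support ⊆ {a}) :
    p = HahnSeries.single a (p.coeff a) := by
  ext g
  by_cases hg : g = a
  · subst hg; rw [HahnSeries.coeff_single_same]
  · rw [HahnSeries.coeff_single_of_ne hg]
    by_contra hne
    exact hg (h hne)

lemma exists_minpair {p : HahnSeries G S} (hp0 : p ≠ 0) (hp : ¬ IsMonomialSeries p) :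
    ∃ a0 a1, a0 ∈ p.support ∧ a1 ∈ p.support ∧ a0 < a1 ∧
      (∀ x ∈ p.support, a0 ≤ x) ∧ (∀ x ∈ p.support, x ≠ a0 → a1 ≤ x) := by
  have hne : p.support.Nonempty := HahnSeries.support_nonempty_iff.2 hp0
  have hwf : p.support.IsWF := p.isWF_support
  set a0 := hwf.min hne with ha0def
  have ha0 : a0 ∈ p.support := hwf.min_mem hne
  have hmin : ∀ x ∈ p.support, a0 ≤ x := fun x hx => hwf.min_le hne hx
  have hex : ∃ x ∈ p.support, x ≠ a0 := by
    by_contra hc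
    push_neg at hc
    exact hp ⟨a0, p.coeff a0, eq_single_of_support_subset (fun x hx => hc x hx)⟩
  have hwf1 : (p.support \ {a0}).IsWF := hwf.mono Set.diff_subset
  have hne1 : (p.support \ {a0}).Nonempty := by
    obtain ⟨x, hx, hxa⟩ := hex
    exact ⟨x, hx, hxa⟩
  set a1 := hwf1.min hne1 with ha1def
  have ha1' : a1 ∈ p.support \ {a0} := hwf1.min_mem hne1
  refine ⟨a0, a1, ha0, ha1'.1, ?_, hmin, ?_⟩
  · exact lt_of_le_of_ne (hmin _ ha1'.1) (Ne.symm ha1'.2)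
  · intro x hx hxa
    exact hwf1.min_le hne1 ⟨hx, hxa⟩

lemma inSeries_single (hσ : ∃ σ : ℕ → G, StrictMono σ) (a : G) (r : S) :
    InSeries (HahnSeries.single a r) := by
  obtain ⟨σ, hs⟩ := hσ
  refine ⟨fun n => a + (σ n - σ 0), fun m n h => by
    have := hs h
    have h2 : σ m - σ 0 < σ n - σ 0 := sub_lt_sub_right this _
    exact add_lt_add_right h2 a, ?_⟩
  intro x hx
  have hxa : x = a := HahnSeries.support_single_subset hx
  exact ⟨0, by simp [hxa]⟩

lemma unit_of_monomial_factor {f p q : HahnSeries G S} (heq : f = p * q)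
    (hp : InSeries p) {g : G} {s : S} (hps : p = HahnSeries.single g s)
    {γ : G} (hγ : IsUnit (f.coeff γ)) : IsUnitSeries p := by
  have hc : f.coeff γ = s * q.coeff (γ - g) := by
    rw [heq, hps]
    have h2 : γ = (γ - g) + g := by abel
    rw [h2, HahnSeries.coeff_single_mul_add, add_sub_cancel_right]
  have hs : IsUnit s := isUnit_of_mul_isUnit_left (by rw [← hc]; exact hγ)
  obtain ⟨u, rfl⟩ := hs
  have hσ : ∃ σ : ℕ → G, StrictMono σ := by
    obtain ⟨σ, hσ, -⟩ := hp
    exact ⟨σ, hσ⟩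
  refine ⟨hp, HahnSeries.single (-g) ((u⁻¹ : Sˣ) : S), inSeries_single hσ _ _, ?_⟩
  rw [hps, HahnSeries.single_mul_single, add_neg_cancel, Units.mul_inv, HahnSeries.single_zero_one]

lemma tie_coeff {p q : HahnSeries G S} {a0 a1 b0 b1 e1 : G}
    (ha0 : a0 ∈ p.support) (ha1 : a1 ∈ p.support) (h01 : a0 < a1)
    (hasec : ∀ x ∈ p.support, x ≠ a0 → a1 ≤ x)
    (hb0 : b0 ∈ q.support) (hb1 : b1 ∈ q.support)
    (hbmin : ∀ x ∈ q.support, b0 ≤ x)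
    (he1 : e1 = a0 + b1) (he1' : e1 = a1 + b0) :
    (p * q).coeff e1 = p.coeff a0 * q.coeff b1 + p.coeff a1 * q.coeff b0 := by
  classical
  rw [HahnSeries.coeff_mul]
  have hset : Finset.antidiagonal p.isPWO_support q.isPWO_support e1
      = {((a0 : G), (b1 : G)), (a1, b0)} := by
    ext ⟨x, y⟩
    simp only [Finset.mem_antidiagonal, Finset.mem_insert, Finset.mem_singleton,
      Prod.mk.injEq]
    constructor
    · rintro ⟨hx, hy, hxy⟩
      by_cases hxa : x = a0
      · subst hxa
        left
        refine ⟨rfl, ?_⟩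
        have : x + y = x + b1 := by rw [hxy, he1]
        exact add_left_cancel this
      · have hx1 : a1 ≤ x := hasec x hx hxa
        rcases eq_or_lt_of_le hx1 with h | h
        · subst h
          right
          refine ⟨rfl, ?_⟩
          have h3 : a1 + y = a1 + b0 := by rw [hxy]; exact he1'
          exact add_left_cancel h3
        · exfalso
          have h2 : a1 + b0 < x + b0 := add_lt_add_left h b0
          rw [← he1'] at h2
          rw [← hxy] at h2
          exact absurd (hbmin y hy) (not_le.2 (lt_of_add_lt_add_left h2))
    · rintro (⟨rfl, rfl⟩ | ⟨rfl, rfl⟩)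
      · exact ⟨ha0, hb1, he1.symm⟩
      · exact ⟨ha1, hb0, he1'.symm⟩
  rw [hset, Finset.sum_insert, Finset.sum_singleton]
  simp only [Finset.mem_singleton, Prod.mk.injEq, not_and]
  intro h
  exact absurd h (ne_of_lt h01)

lemma strict_aux (hS : IsSemidomain S) (hred : AddReduced S)
    {f p q : HahnSeries G S} (heq : f = p * q) {e0 e1 a0 a1 b0 b1 : G}
    (ha1 : a1 ∈ p.support) (hb0 : b0 ∈ q.support) (hb1 : b1 ∈ q.support)
    (he1 : e1 = a0 + b1) (hlt : a0 + b1 < a1 + b0) (he0 : e0 = a0 + b0)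
    (hno : ∀ x ∈ f.support, e1 < x → x + (e1 - e0) ∉ f.support) : False := by
  have hx : a1 + b0 ∈ f.support := by rw [heq]; exact add_mem_support_mul hS hred ha1 hb0
  have hxx : a1 + b1 ∈ f.support := by rw [heq]; exact add_mem_support_mul hS hred ha1 hb1
  refine hno _ hx (by rw [he1]; exact hlt) ?_
  have harr : (a1 + b0) + (e1 - e0) = a1 + b1 := by rw [he1, he0]; abel
  rw [harr]
  exact hxx

end WGS

namespace WGS2
open HahnSeries WGS

variable {S : Type*} [CommSemiring S] {G : Type*} [AddCommGroup G] [LinearOrder G] [IsOrderedAddMonoid G]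

lemma criterion (hS : IsSemidomain S) (hred : AddReduced S)
    {f : HahnSeries G S} (hf : InSeries f) {e0 e1 : G}
    (h0 : e0 ∈ f.support) (h1 : e1 ∈ f.support) (h01 : e0 < e1)
    (hmin : ∀ x ∈ f.support, e0 ≤ x)
    (hsec : ∀ x ∈ f.support, x ≠ e0 → e1 ≤ x)
    (hno : ∀ x ∈ f.support, e1 < x → x + (e1 - e0) ∉ f.support)
    (htie : IsAddAtom (f.coeff e1) ∨ e1 + (e1 - e0) ∉ f.support)
    (hunit : ∃ g : G, IsUnit (f.coeff g)) :
    IrreducibleSeries f := by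
  have h10 : (1 : S) ≠ 0 := by
    intro h
    apply (HahnSeries.mem_support f e0).1 h0
    calc f.coeff e0 = f.coeff e0 * 1 := (mul_one _).symm
    _ = f.coeff e0 * 0 := by rw [h]
    _ = 0 := mul_zero _
  have hf0 : f ≠ 0 := by rintro rfl; simp at h0
  refine ⟨hf, hf0, ?_, ?_⟩
  · rintro ⟨-, h, hhin, hfh⟩
    have hh0 : h ≠ 0 := by
      rintro rfl
      rw [mul_zero] at hfh
      apply h10
      have := congrArg (fun w : HahnSeries G S => w.coeff 0) hfh
      simpa using this.symm
    obtain ⟨b, hb⟩ := HahnSeries.support_nonempty_iff.2 hh0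
    have m1 : e0 + b ∈ (f * h).support := add_mem_support_mul hS hred h0 hb
    have m2 : e1 + b ∈ (f * h).support := add_mem_support_mul hS hred h1 hb
    rw [hfh] at m1 m2
    have hsupp1 : (1 : HahnSeries G S).support ⊆ {0} := by
      rw [← HahnSeries.single_zero_one]
      exact HahnSeries.support_single_subset
    have e1b : e0 + b = 0 := hsupp1 m1
    have e2b : e1 + b = 0 := hsupp1 m2
    exact absurd (add_right_cancel (e1b.trans e2b.symm)) (ne_of_lt h01)
  · intro p q hp hq heq
    have hp0 : p ≠ 0 := by rintro rfl; rw [zero_mul] at heq; exact hf0 heq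
    have hq0 : q ≠ 0 := by rintro rfl; rw [mul_zero] at heq; exact hf0 heq
    obtain ⟨γ, hγ⟩ := hunit
    have hmono : IsMonomialSeries p ∨ IsMonomialSeries q := by
      by_contra hc
      push_neg at hc
      obtain ⟨hmp, hmq⟩ := hc
      obtain ⟨a0, a1, ha0, ha1, ha01, hamin, hasec⟩ := exists_minpair hp0 hmp
      obtain ⟨b0, b1, hb0, hb1, hb01, hbmin, hbsec⟩ := exists_minpair hq0 hmq
      -- e0 = a0 + b0
      have hab : a0 + b0 ∈ f.support := by
        rw [heq]; exact add_mem_support_mul hS hred ha0 hb0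
      have he0 : e0 = a0 + b0 := by
        refine le_antisymm (hmin _ hab) ?_
        have h0' : e0 ∈ (p * q).support := by rw [← heq]; exact h0
        obtain ⟨x, hx, y, hy, hxy⟩ := Set.mem_add.1 (HahnSeries.support_mul_subset h0')
        rw [← hxy]
        exact add_le_add (hamin x hx) (hbmin y hy)
      -- memberships
      have hab1 : a0 + b1 ∈ f.support := by
        rw [heq]; exact add_mem_support_mul hS hred ha0 hb1
      have ha1b : a1 + b0 ∈ f.support := by
        rw [heq]; exact add_mem_support_mul hS hred ha1 hb0
      have hgt1 : e0 < a0 + b1 := by rw [he0]; exact add_lt_add_right hb01 a0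
      have hgt2 : e0 < a1 + b0 := by rw [he0]; exact add_lt_add_left ha01 b0
      have hle1 : e1 ≤ a0 + b1 := hsec _ hab1 (ne_of_gt hgt1)
      have hle2 : e1 ≤ a1 + b0 := hsec _ ha1b (ne_of_gt hgt2)
      -- e1 is one of the two
      have hone : e1 = a0 + b1 ∨ e1 = a1 + b0 := by
        have h1' : e1 ∈ (p * q).support := by rw [← heq]; exact h1
        obtain ⟨x, hx, y, hy, hxy⟩ := Set.mem_add.1 (HahnSeries.support_mul_subset h1')
        by_cases hxa : x = a0
        · subst hxa
          left
          refine le_antisymm hle1 ?_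
          have hyb : y ≠ b0 := by
            rintro rfl
            rw [hxy] at he0
            exact (ne_of_lt h01) (he0.symm ▸ rfl)
          rw [← hxy]
          exact add_le_add_right (hbsec y hy hyb) x
        · right
          refine le_antisymm hle2 ?_
          rw [← hxy]
          exact add_le_add (hasec x hx hxa) (hbmin y hy)
      -- tie or strict
      rcases hone with he1 | he1
      · rcases eq_or_lt_of_le hle2 with htieq | hstrict
        · -- tie case
          have hco : f.coeff e1 = p.coeff a0 * q.coeff b1 + p.coeff a1 * q.coeff b0 := by
            rw [heq]
            exact tie_coeff ha0 ha1 ha01 hasec hb0 hb1 hbmin he1 htieq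
          have hX : p.coeff a0 * q.coeff b1 ≠ 0 :=
            mul_ne_zero' hS ((HahnSeries.mem_support _ _).1 ha0) ((HahnSeries.mem_support _ _).1 hb1)
          have hY : p.coeff a1 * q.coeff b0 ≠ 0 :=
            mul_ne_zero' hS ((HahnSeries.mem_support _ _).1 ha1) ((HahnSeries.mem_support _ _).1 hb0)
          rcases htie with hat | hns
          · rcases hat.2 _ _ hco with h | h
            · exact hX h
            · exact hY h
          · apply hns
            have harr : e1 + (e1 - e0) = a1 + b1 := by
              nth_rewrite 2 [htieq]
              rw [he1, he0]
              abel
            rw [harr, heq]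
            exact add_mem_support_mul hS hred ha1 hb1
        · exact strict_aux hS hred heq ha1 hb0 hb1 he1 (by rw [← he1]; exact hstrict) he0 hno
      · rcases eq_or_lt_of_le hle1 with htieq | hstrict
        · -- tie case (other orientation)
          have hco : f.coeff e1 = q.coeff b0 * p.coeff a1 + q.coeff b1 * p.coeff a0 := by
            rw [heq, mul_comm]
            exact tie_coeff hb0 hb1 hb01 hbsec ha0 ha1 hamin
              (he1.trans (add_comm a1 b0)) (htieq.trans (add_comm a0 b1))
          have hX : q.coeff b0 * p.coeff a1 ≠ 0 :=
            mul_ne_zero' hS ((HahnSeries.mem_support _ _).1 hb0) ((HahnSeries.mem_support _ _).1 ha1)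
          have hY : q.coeff b1 * p.coeff a0 ≠ 0 :=
            mul_ne_zero' hS ((HahnSeries.mem_support _ _).1 hb1) ((HahnSeries.mem_support _ _).1 ha0)
          rcases htie with hat | hns
          · rcases hat.2 _ _ hco with h | h
            · exact hX h
            · exact hY h
          · apply hns
            have harr : e1 + (e1 - e0) = a1 + b1 := by
              nth_rewrite 2 [htieq]
              rw [he1, he0]
              abel
            rw [harr, heq]
            exact add_mem_support_mul hS hred ha1 hb1
        · refine strict_aux hS hred (f := f) (p := q) (q := p) (e0 := e0) (e1 := e1)
            (a0 := b0) (a1 := b1) (b0 := a0) (b1 := a1) (by rw [heq, mul_comm])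
            hb1 ha0 ha1 (he1.trans (add_comm a1 b0)) ?_ (he0.trans (add_comm a0 b0)) hno
          calc b0 + a1 = a1 + b0 := add_comm b0 a1
          _ = e1 := he1.symm
          _ < a0 + b1 := hstrict
          _ = b1 + a0 := add_comm a0 b1
    rcases hmono with ⟨g, s, hgs⟩ | ⟨g, s, hgs⟩
    · exact Or.inl (unit_of_monomial_factor heq hp hgs hγ)
    · exact Or.inr (unit_of_monomial_factor (by rw [heq, mul_comm]) hq hgs hγ)

end WGS2

namespace WGS3
open HahnSeries WGS WGS2
open scoped Classical

variable {S : Type*} [CommSemiring S] {G : Type*} [AddCommGroup G] [LinearOrder G] [IsOrderedAddMonoid G]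

/-- chain condition: the `d`-descending chain from `y` stays in `E` above `e1` for `n` steps. -/
def chainQ (E : Set G) (e1 d y : G) (n : ℕ) : Prop :=
  ∀ j : ℕ, 1 ≤ j → j ≤ n → y - (j : ℕ) • d ∈ E ∧ e1 < y - (j : ℕ) • d

lemma chainQ_zero {E : Set G} {e1 d y : G} : chainQ E e1 d y 0 := by
  intro j h1 h0
  omega

lemma chainQ_mono {E : Set G} {e1 d y : G} {m n : ℕ} (h : chainQ E e1 d y n) (hmn : m ≤ n) :
    chainQ E e1 d y m := fun j h1 hj => h j h1 (hj.trans hmn)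

lemma chainQ_one_iff {E : Set G} {e1 d y : G} :
    chainQ E e1 d y 1 ↔ (y - d ∈ E ∧ e1 < y - d) := by
  constructor
  · intro h
    have := h 1 le_rfl le_rfl
    simpa using this
  · intro h j h1 hj
    have hj1 : j = 1 := le_antisymm hj h1
    subst hj1
    simpa using h

lemma chainQ_succ_iff {E : Set G} {e1 d y : G} {n : ℕ} :
    chainQ E e1 d y (n + 1) ↔ ((y - d ∈ E ∧ e1 < y - d) ∧ chainQ E e1 d (y - d) n) := by
  have harr : ∀ j : ℕ, y - ((j : ℕ) + 1) • d = (y - d) - (j : ℕ) • d := by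
    intro j
    rw [succ_nsmul]
    abel
  constructor
  · intro h
    refine ⟨by simpa using h 1 le_rfl (by omega), fun j h1 hj => ?_⟩
    have h2 := h (j + 1) (by omega) (by omega)
    rw [show ((j + 1 : ℕ) : ℕ) • d = ((j : ℕ) + 1) • d by norm_cast, harr j] at h2
    exact h2
  · rintro ⟨h1, h⟩ j hj1 hjn
    obtain ⟨i, rfl⟩ : ∃ i, j = i + 1 := ⟨j - 1, by omega⟩
    rcases Nat.eq_zero_or_pos i with rfl | hi
    · simpa using h1
    · have h2 := h i (by omega) (by omega)
      rw [show ((i + 1 : ℕ) : ℕ) • d = ((i : ℕ) + 1) • d by norm_cast, harr i]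
      exact h2

lemma chain_exists {E : Set G} (hwf : E.IsWF) {d : G} (hd : 0 < d) (e1 y : G) :
    ∃ n : ℕ, ¬ chainQ E e1 d y (n + 1) := by
  by_contra hc
  push_neg at hc
  have hseq : ∀ n : ℕ, y - ((n : ℕ) + 1) • d ∈ E := by
    intro n
    have := hc n (n + 1) (by omega) le_rfl
    rw [show ((n + 1 : ℕ) : ℕ) • d = ((n : ℕ) + 1) • d by norm_cast] at this
    exact this.1
  have hanti : StrictAnti (fun n : ℕ => y - ((n : ℕ) + 1) • d) := by
    intro m n hmn
    have h2 : ((m : ℕ) + 1) • d < ((n : ℕ) + 1) • d := by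
      refine nsmul_lt_nsmul_left hd (by omega)
    exact sub_lt_sub_left h2 y
  exact Set.isWF_iff_no_descending_seq.1 hwf _ hanti (fun n => hseq n)

noncomputable def chainN {E : Set G} (hwf : E.IsWF) {d : G} (hd : 0 < d) (e1 y : G) : ℕ :=
  Nat.find (chain_exists hwf hd e1 y)

lemma chainN_spec1 {E : Set G} (hwf : E.IsWF) {d : G} (hd : 0 < d) (e1 y : G) :
    ¬ chainQ E e1 d y (chainN hwf hd e1 y + 1) := Nat.find_spec (chain_exists hwf hd e1 y)

lemma chainN_spec2 {E : Set G} (hwf : E.IsWF) {d : G} (hd : 0 < d) (e1 y : G) :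
    chainQ E e1 d y (chainN hwf hd e1 y) := by
  rcases Nat.eq_zero_or_pos (chainN hwf hd e1 y) with h | h
  · rw [h]; exact chainQ_zero
  · have hlt : chainN hwf hd e1 y - 1 < Nat.find (chain_exists hwf hd e1 y) := by
      have : Nat.find (chain_exists hwf hd e1 y) = chainN hwf hd e1 y := rfl
      omega
    have h2 := not_not.1 (Nat.find_min (chain_exists hwf hd e1 y) hlt)
    rw [show chainN hwf hd e1 y - 1 + 1 = chainN hwf hd e1 y by omega] at h2
    exact h2

lemma chainN_eq_zero {E : Set G} (hwf : E.IsWF) {d : G} (hd : 0 < d) {e1 y : G}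
    (h : ¬ (y - d ∈ E ∧ e1 < y - d)) : chainN hwf hd e1 y = 0 := by
  rw [chainN, Nat.find_eq_zero]
  intro hq
  exact h (chainQ_one_iff.1 hq)

lemma chainN_ne_zero {E : Set G} (hwf : E.IsWF) {d : G} (hd : 0 < d) {e1 y : G}
    (h : chainN hwf hd e1 y ≠ 0) : y - d ∈ E ∧ e1 < y - d := by
  by_contra hc
  exact h (chainN_eq_zero hwf hd hc)

lemma chainN_succ {E : Set G} (hwf : E.IsWF) {d : G} (hd : 0 < d) {e1 y : G}
    (h : y - d ∈ E ∧ e1 < y - d) : chainN hwf hd e1 y = chainN hwf hd e1 (y - d) + 1 := by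
  have h1 := chainN_spec1 hwf hd e1 (y - d)
  have h2 := chainN_spec2 hwf hd e1 (y - d)
  rw [chainN, Nat.find_eq_iff]
  constructor
  · intro hq
    exact h1 (chainQ_succ_iff.1 hq).2
  · intro k hk hknot
    apply hknot
    rw [chainQ_succ_iff]
    exact ⟨h, chainQ_mono h2 (by omega)⟩

lemma chainN_add {E : Set G} (hwf : E.IsWF) {d : G} (hd : 0 < d) {e1 x : G}
    (hx : x ∈ E) (hx1 : e1 < x) : chainN hwf hd e1 (x + d) = chainN hwf hd e1 x + 1 := by
  have h : (x + d) - d ∈ E ∧ e1 < (x + d) - d := by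
    rw [add_sub_cancel_right]
    exact ⟨hx, hx1⟩
  rw [chainN_succ hwf hd h, add_sub_cancel_right]

/-- Build a Hahn series supported inside the support of `f`. -/
noncomputable def mk (f : HahnSeries G S) (α : G → S) (h : ∀ g : G, α g ≠ 0 → g ∈ f.support) :
    HahnSeries G S :=
  ⟨α, f.isPWO_support.mono (fun g hg => h g hg)⟩

@[simp] lemma mk_coeff {f : HahnSeries G S} {α : G → S} {h} {g : G} :
    (mk f α h).coeff g = α g := rfl

lemma mk_support_subset {f : HahnSeries G S} {α : G → S} {h} :
    (mk f α h).support ⊆ f.support := fun g hg => h g hg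

lemma mk_inSeries {f : HahnSeries G S} (hf : InSeries f) {α : G → S} {h} :
    InSeries (mk f α h) := by
  obtain ⟨σ, hs, hsub⟩ := hf
  exact ⟨σ, hs, fun x hx => hsub (h x hx)⟩

lemma summand_irreducible (hS : IsSemidomain S) (hred : AddReduced S)
    {h : HahnSeries G S} (hhf : InSeries h) {m0 m1 : G} {W : Set G}
    (hm0 : m0 ∈ h.support) (hm1 : m1 ∈ h.support) (hlt : m0 < m1)
    (hsub : h.support ⊆ {m0, m1} ∪ W)
    (hWgt : ∀ y ∈ W, m1 < y)
    (hW4 : ∀ x ∈ W, x + (m1 - m0) ∉ W)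
    (htie : IsAddAtom (h.coeff m1) ∨ m1 + (m1 - m0) ∉ h.support)
    (hunit : ∃ g : G, IsUnit (h.coeff g)) : IrreducibleSeries h := by
  have hdpos : (0 : G) < m1 - m0 := sub_pos.2 hlt
  refine criterion hS hred hhf hm0 hm1 hlt ?_ ?_ ?_ htie hunit
  · intro x hx
    rcases hsub hx with (h1 | h1) | h1
    · exact le_of_eq h1.symm
    · rw [Set.mem_singleton_iff] at h1
      exact h1 ▸ hlt.le
    · exact (hlt.trans (hWgt x h1)).le
  · intro x hx hxm
    rcases hsub hx with (h1 | h1) | h1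
    · exact absurd h1 hxm
    · rw [Set.mem_singleton_iff] at h1
      exact le_of_eq h1.symm
    · exact (hWgt x h1).le
  · intro x hx hxgt hmem
    have hxW : x ∈ W := by
      rcases hsub hx with (h1 | h1) | h1
      · exact absurd h1 (ne_of_gt (hlt.trans hxgt))
      · rw [Set.mem_singleton_iff] at h1
        exact absurd h1 (ne_of_gt hxgt)
      · exact h1
    have hxdW : x + (m1 - m0) ∈ W := by
      rcases hsub hmem with (h1 | h1) | h1
      · exfalso
        have : m0 < x + (m1 - m0) := lt_of_lt_of_le (hlt.trans hxgt) (le_add_of_nonneg_right hdpos.le)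
        exact (ne_of_gt this) h1
      · exfalso
        rw [Set.mem_singleton_iff] at h1
        have : m1 < x + (m1 - m0) := lt_of_le_of_lt (le_add_of_nonneg_right hdpos.le) (by exact add_lt_add_left hxgt _)
        exact (ne_of_gt this) h1
      · exact h1
    exact hW4 x hxW hxdW

end WGS3

/-- Weak Goldbach for group series semidomains: if `S` is additively reduced, additively
Furstenberg with `A₊(S) = S^×`, and every bounded-below subset of `G` is well-ordered, then
every `f ∈ S⟦G⟧` with more than one term is a sum of at most three irreducibles of `S⟦G⟧`. -/
theorem weak_goldbach_series
    {S : Type*} [CommSemiring S] {G : Type*} [AddCommGroup G] [LinearOrder G] [IsOrderedAddMonoid G]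
    (hS : IsSemidomain S) (hred : AddReduced S) (hfur : AddFurstenberg S)
    (hatoms : ∀ a : S, IsAddAtom a ↔ IsUnit a)
    (hwo : ∀ A : Set G, BddBelow A → A.IsWF)
    (f : HahnSeries G S) (hin : InSeries f) (hsupp : f.support.Nontrivial) :
    ∃ (k : ℕ) (p : Fin k → HahnSeries G S),
      k ≤ 3 ∧ (∀ i, IrreducibleSeries (p i)) ∧ f = ∑ i, p i := by
  classical
  open WGS WGS2 WGS3 in
  -- basic facts about S
  have h10 : (1 : S) ≠ 0 := ((hatoms 1).2 isUnit_one).1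
  haveI : Nontrivial S := nontrivial_of_ne 1 0 h10
  have hsplit : ∀ c : S, c ≠ 0 → ∃ u t : S, IsUnit u ∧ c = u + t := by
    intro c hc
    obtain ⟨a, t, hat, h⟩ := hfur c hc
    exact ⟨a, t, (hatoms a).1 hat, h⟩
  have hdich2 : ∀ c : S, c ≠ 0 → ¬ IsUnit c → ∃ u t : S, IsUnit u ∧ t ≠ 0 ∧ c = u + t := by
    intro c hc hcu
    have hna : ¬ IsAddAtom c := fun h => hcu ((hatoms c).1 h)
    rw [IsAddAtom, not_and_or] at hna
    rcases hna with h | h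
    · exact absurd (not_not.1 h) hc
    · push_neg at h
      obtain ⟨a, b, hab, ha, hb⟩ := h
      obtain ⟨u, t, hu, hut⟩ := hsplit a ha
      refine ⟨u, t + b, hu, ?_, by rw [hab, hut, add_assoc]⟩
      intro h0
      exact hb (hred b t (by rwa [add_comm] at h0))
  -- support setup
  have hwf : f.support.IsWF := f.isWF_support
  have hEne : f.support.Nonempty := hsupp.nonempty
  set e0 := hwf.min hEne with he0_def
  have he0mem : e0 ∈ f.support := hwf.min_mem hEne
  have he0min : ∀ x ∈ f.support, e0 ≤ x := fun x hx => hwf.min_le hEne hx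
  have hE1wf : (f.support \ {e0}).IsWF := hwf.mono Set.diff_subset
  have hE1ne : (f.support \ {e0}).Nonempty := by
    obtain ⟨x, hx, y, hy, hxy⟩ := hsupp
    by_cases hxe : x = e0
    · exact ⟨y, hy, fun h => hxy (hxe.trans h.symm)⟩
    · exact ⟨x, hx, hxe⟩
  set e1 := hE1wf.min hE1ne with he1_def
  have he1mem' : e1 ∈ f.support \ {e0} := hE1wf.min_mem hE1ne
  have he1mem : e1 ∈ f.support := he1mem'.1
  have he1ne0 : e1 ≠ e0 := he1mem'.2
  have h01 : e0 < e1 := lt_of_le_of_ne (he0min _ he1mem) (Ne.symm he1ne0)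
  have he1sec : ∀ x ∈ f.support, x ≠ e0 → e1 ≤ x := fun x hx hxe =>
    hE1wf.min_le hE1ne ⟨hx, hxe⟩
  have hTgt : ∀ x ∈ f.support, x ≠ e0 → x ≠ e1 → e1 < x := fun x hx hx0 hx1 =>
    lt_of_le_of_ne (he1sec x hx hx0) (Ne.symm hx1)
  set d := e1 - e0 with hd_def
  have hdpos : (0 : G) < d := sub_pos.2 h01
  set z0 := e1 + d with hz0_def
  have hz0gt : e1 < z0 := lt_add_of_pos_right e1 hdpos
  have hz0gt0 : e0 < z0 := h01.trans hz0gt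
  -- coefficients at the two lowest exponents
  have hc0 : f.coeff e0 ≠ 0 := (HahnSeries.mem_support f e0).1 he0mem
  have hc1 : f.coeff e1 ≠ 0 := (HahnSeries.mem_support f e1).1 he1mem
  -- the chain parity function
  set N : G → ℕ := chainN hwf hdpos e1 with hN_def
  have hNadd : ∀ x ∈ f.support, e1 < x → N (x + d) = N x + 1 := by
    intro x hx hx1
    rw [hN_def]
    exact chainN_add hwf hdpos hx hx1
  have hNz0 : z0 ∈ f.support → N z0 = 0 := by
    intro _
    rw [hN_def]
    apply chainN_eq_zero hwf hdpos
    rw [hz0_def, add_sub_cancel_right]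
    rintro ⟨-, h⟩
    exact lt_irrefl e1 h
  set EvS : Set G := {y : G | y ∈ f.support ∧ e1 < y ∧ Even (N y)} with hEvS_def
  set OdS : Set G := {y : G | y ∈ f.support ∧ e1 < y ∧ Odd (N y)} with hOdS_def
  have hEvE : ∀ y ∈ EvS, y ∈ f.support := fun y hy => hy.1
  have hOdE : ∀ y ∈ OdS, y ∈ f.support := fun y hy => hy.1
  have hEv_not_Od : ∀ g, g ∈ EvS → g ∉ OdS := fun g hg h2 =>
    (Nat.not_odd_iff_even.2 hg.2.2) h2.2.2
  have hOd_not_Ev : ∀ g, g ∈ OdS → g ∉ EvS := fun g hg h2 =>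
    (Nat.not_odd_iff_even.2 h2.2.2) hg.2.2
  have hW4Ev : ∀ x ∈ EvS, x + d ∉ EvS := by
    rintro x hx ⟨hmem, hgt, hev⟩
    rw [hNadd x hx.1 hx.2.1] at hev
    exact (Nat.even_add_one.1 hev) hx.2.2
  have hW4Od : ∀ x ∈ OdS, x + d ∉ OdS := by
    rintro x hx ⟨hmem, hgt, hodd⟩
    rw [hNadd x hx.1 hx.2.1, Nat.odd_add_one] at hodd
    exact hodd hx.2.2
  have hOd_gt : ∀ y ∈ OdS, z0 < y := by
    intro y hy
    have hne : N y ≠ 0 := by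
      rcases hy.2.2 with ⟨k, hk⟩
      omega
    rw [hN_def] at hne
    have := chainN_ne_zero hwf hdpos hne
    rw [hz0_def]
    exact lt_sub_iff_add_lt.1 this.2
  have hz0_not_Od : z0 ∉ OdS := by
    intro h
    exact lt_irrefl z0 (hOd_gt z0 h)
  have he0_not_Od : e0 ∉ OdS := fun h => absurd h.2.1 (not_lt.2 h01.le)
  have he1_not_Od : e1 ∉ OdS := fun h => lt_irrefl e1 h.2.1
  have he0_not_Ev : e0 ∉ EvS := fun h => absurd h.2.1 (not_lt.2 h01.le)
  have he1_not_Ev : e1 ∉ EvS := fun h => lt_irrefl e1 h.2.1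
  have hsupp_split : ∀ g ∈ f.support, g = e0 ∨ g = e1 ∨ g ∈ EvS ∨ g ∈ OdS := by
    intro g hg
    by_cases h1 : g = e0
    · exact Or.inl h1
    by_cases h2 : g = e1
    · exact Or.inr (Or.inl h2)
    have hgt := hTgt g hg h1 h2
    rcases Nat.even_or_odd (N g) with h | h
    · exact Or.inr (Or.inr (Or.inl ⟨hg, hgt, h⟩))
    · exact Or.inr (Or.inr (Or.inr ⟨hg, hgt, h⟩))

  -- packaging helpers ------------------------------------------------------
  have pack2 : ∀ A B : HahnSeries G S, IrreducibleSeries A → IrreducibleSeries B →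
      f = A + B → ∃ (k : ℕ) (p : Fin k → HahnSeries G S),
      k ≤ 3 ∧ (∀ i, IrreducibleSeries (p i)) ∧ f = ∑ i, p i := by
    intro A B hA hB hsum
    refine ⟨2, ![A, B], by norm_num, ?_, ?_⟩
    · intro i
      fin_cases i
      · simpa using hA
      · simpa using hB
    · rw [Fin.sum_univ_two]
      simpa using hsum
  by_cases hcaseI : IsUnit (f.coeff e1) ∨ (z0 ∉ f.support ∧ IsUnit (f.coeff e0))
  · -- Case I : the second coefficient is a unit, or z0 is outside the support and c0 is a unit
    by_cases hOem : OdS = ∅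
    · -- f itself is irreducible
      have hfirr : IrreducibleSeries f := by
        refine summand_irreducible hS hred hin (m0 := e0) (m1 := e1)
          (W := {y : G | y ∈ f.support ∧ e1 < y}) he0mem he1mem h01 ?_ ?_ ?_ ?_ ?_
        · intro g hg
          rcases hsupp_split g hg with h | h | h | h
          · exact Set.mem_union_left _ (by simp [h])
          · exact Set.mem_union_left _ (by simp [h])
          · exact Set.mem_union_right _ ⟨h.1, h.2.1⟩
          · exact Set.mem_union_right _ ⟨h.1, h.2.1⟩
        · intro y hy
          exact hy.2
        · rintro x ⟨hx, hx1⟩ hmem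
          rw [← hd_def] at hmem
          obtain ⟨hxd, hxd1⟩ := hmem
          rcases Nat.even_or_odd (N x) with h | h
          · have hbad : x + d ∈ OdS := ⟨hxd, hxd1, by rw [hNadd x hx hx1]; exact Even.add_one h⟩
            rw [hOem] at hbad
            exact hbad
          · have hbad : x ∈ OdS := ⟨hx, hx1, h⟩
            rw [hOem] at hbad
            exact hbad
        · rcases hcaseI with h | h
          · exact Or.inl ((hatoms _).2 h)
          · exact Or.inr (by rw [← hd_def, ← hz0_def]; exact h.1)
        · rcases hcaseI with h | h
          · exact ⟨e1, h⟩
          · exact ⟨e0, h.2⟩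
      refine ⟨1, ![f], by norm_num, ?_, ?_⟩
      · intro i
        fin_cases i
        simpa using hfirr
      · simp
    · -- two irreducible summands
      have hOdne : OdS.Nonempty := Set.nonempty_iff_ne_empty.2 hOem
      have hOdwf : OdS.IsWF := hwf.mono (fun y hy => hy.1)
      set z' := hOdwf.min hOdne with hz'_def
      have hz'Od : z' ∈ OdS := hOdwf.min_mem hOdne
      have hz'min : ∀ y ∈ OdS, z' ≤ y := fun y hy => hOdwf.min_le hOdne hy
      have hz'ne : chainN hwf hdpos e1 z' ≠ 0 := by
        rw [← hN_def]
        rcases hz'Od.2.2 with ⟨k, hk⟩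
        omega
      have hchain := chainN_ne_zero hwf hdpos hz'ne
      set z := z' - d with hz_def
      have hzE : z ∈ f.support := hchain.1
      have hze1 : e1 < z := hchain.2
      have hz'z : z' = z + d := by rw [hz_def]; abel
      have hNz' : N z' = N z + 1 := by
        rw [hN_def, hz_def]
        exact chainN_succ hwf hdpos hchain
      have hNz_even : Even (N z) := by
        rcases Nat.even_or_odd (N z) with h | h
        · exact h
        · exfalso
          have hzodd : Odd (N z') := hz'Od.2.2
          rw [hNz'] at hzodd
          rcases h with ⟨k, hk⟩
          rcases hzodd with ⟨m, hm⟩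
          omega
      have hzEv : z ∈ EvS := ⟨hzE, hze1, hNz_even⟩
      have hz_not_Od : z ∉ OdS := hEv_not_Od z hzEv
      have hzltz' : z < z' := by rw [hz'z]; exact lt_add_of_pos_right z hdpos
      obtain ⟨uz, tz, huz, hczeq⟩ := hsplit _ ((HahnSeries.mem_support f z).1 hzE)
      have hze0 : z ≠ e0 := ne_of_gt (h01.trans hze1)
      have hze1' : z ≠ e1 := ne_of_gt hze1
      set αA : G → S := fun g => if g = e0 then f.coeff e0 else if g = e1 then f.coeff e1
        else if g = z then tz else if g ∈ EvS then f.coeff g else 0 with hαA_def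
      have hA0 : ∀ g : G, αA g ≠ 0 → g ∈ f.support := by
        intro g hg
        simp only [hαA_def] at hg
        split_ifs at hg with h1 h2 h3 h4
        · exact h1 ▸ he0mem
        · exact h2 ▸ he1mem
        · exact h3 ▸ hzE
        · exact h4.1
        · exact absurd rfl hg
      set A := mk f αA hA0 with hA_def
      set αB : G → S := fun g => if g = z then uz else if g ∈ OdS then f.coeff g else 0
        with hαB_def
      have hB0 : ∀ g : G, αB g ≠ 0 → g ∈ f.support := by
        intro g hg
        simp only [hαB_def] at hg
        split_ifs at hg with h1 h2
        · exact h1 ▸ hzE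
        · exact h2.1
        · exact absurd rfl hg
      set B := mk f αB hB0 with hB_def
      have hAe0 : A.coeff e0 = f.coeff e0 := by
        rw [hA_def, mk_coeff, hαA_def]; simp
      have hAe1 : A.coeff e1 = f.coeff e1 := by
        rw [hA_def, mk_coeff, hαA_def]; simp [he1ne0]
      have hBz : B.coeff z = uz := by
        rw [hB_def, mk_coeff, hαB_def]; simp
      have hBz' : B.coeff z' = f.coeff z' := by
        rw [hB_def, mk_coeff, hαB_def]
        beta_reduce
        rw [if_neg (Ne.symm (ne_of_lt hzltz')), if_pos hz'Od]
      have hsum : f = A + B := by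
        ext g
        rw [HahnSeries.coeff_add, hA_def, hB_def, mk_coeff, mk_coeff, hαA_def, hαB_def]
        beta_reduce
        by_cases h1 : g = e0
        · subst h1
          rw [if_pos rfl, if_neg (Ne.symm hze0), if_neg he0_not_Od, add_zero]
        by_cases h2 : g = e1
        · subst h2
          rw [if_neg he1ne0, if_pos rfl, if_neg (Ne.symm hze1'), if_neg he1_not_Od, add_zero]
        by_cases h3 : g = z
        · subst h3
          rw [if_neg h1, if_neg h2, if_pos rfl, if_pos rfl, hczeq, add_comm]
        rw [if_neg h1, if_neg h2, if_neg h3, if_neg h3]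
        by_cases hg : g ∈ f.support
        · rcases hsupp_split g hg with h | h | h | h
          · exact absurd h h1
          · exact absurd h h2
          · rw [if_pos h, if_neg (hEv_not_Od g h), add_zero]
          · rw [if_neg (hOd_not_Ev g h), if_pos h, zero_add]
        · have hg0 : f.coeff g = 0 := not_not.1 (fun h => hg h)
          have hge : g ∉ EvS := fun h => hg h.1
          have hgo : g ∉ OdS := fun h => hg h.1
          rw [hg0, if_neg hge, if_neg hgo, add_zero]
      have hAirr : IrreducibleSeries A := by
        refine summand_irreducible hS hred (mk_inSeries hin) (m0 := e0) (m1 := e1) (W := EvS)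
          ?_ ?_ h01 ?_ ?_ ?_ ?_ ?_
        · exact (HahnSeries.mem_support _ _).2 (by rw [hAe0]; exact hc0)
        · exact (HahnSeries.mem_support _ _).2 (by rw [hAe1]; exact hc1)
        · intro g hg
          have hg' : αA g ≠ 0 := hg
          simp only [hαA_def] at hg'
          split_ifs at hg' with h1 h2 h3 h4
          · exact Set.mem_union_left _ (by simp [h1])
          · exact Set.mem_union_left _ (by simp [h2])
          · exact Set.mem_union_right _ (h3 ▸ hzEv)
          · exact Set.mem_union_right _ h4
          · exact absurd rfl hg'
        · intro y hy
          exact hy.2.1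
        · intro x hx
          rw [← hd_def]
          exact hW4Ev x hx
        · rcases hcaseI with h | h
          · exact Or.inl (by rw [hAe1]; exact (hatoms _).2 h)
          · refine Or.inr ?_
            rw [← hd_def, ← hz0_def]
            exact fun hmem => h.1 (mk_support_subset hmem)
        · rcases hcaseI with h | h
          · exact ⟨e1, by rw [hAe1]; exact h⟩
          · exact ⟨e0, by rw [hAe0]; exact h.2⟩
      have hBirr : IrreducibleSeries B := by
        have hd' : z' - z = d := by rw [hz'z]; exact add_sub_cancel_left z d
        refine summand_irreducible hS hred (mk_inSeries hin) (m0 := z) (m1 := z')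
          (W := OdS \ {z'}) ?_ ?_ hzltz' ?_ ?_ ?_ ?_ ?_
        · exact (HahnSeries.mem_support _ _).2 (by rw [hBz]; exact huz.ne_zero)
        · exact (HahnSeries.mem_support _ _).2
            (by rw [hBz']; exact (HahnSeries.mem_support f z').1 hz'Od.1)
        · intro g hg
          have hg' : αB g ≠ 0 := hg
          simp only [hαB_def] at hg'
          split_ifs at hg' with h1 h2
          · exact Set.mem_union_left _ (by simp [h1])
          · by_cases hgz' : g = z'
            · exact Set.mem_union_left _ (by simp [hgz'])
            · exact Set.mem_union_right _ ⟨h2, hgz'⟩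
          · exact absurd rfl hg'
        · rintro y ⟨hy, hyne⟩
          exact lt_of_le_of_ne (hz'min y hy) (Ne.symm hyne)
        · intro x hx
          rw [hd']
          rintro ⟨hmem, -⟩
          exact hW4Od x hx.1 hmem
        · refine Or.inr ?_
          rw [hd']
          intro hmem
          have hg' : αB (z' + d) ≠ 0 := hmem
          simp only [hαB_def] at hg'
          have hne1' : z' + d ≠ z := ne_of_gt (hzltz'.trans (lt_add_of_pos_right z' hdpos))
          rw [if_neg hne1', if_neg (hW4Od z' hz'Od)] at hg'
          exact hg' rfl
        · exact ⟨z, by rw [hBz]; exact huz⟩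
      exact pack2 A B hAirr hBirr hsum
  · push_neg at hcaseI
    obtain ⟨hc1nu, hrest⟩ := hcaseI
    by_cases hc0u : IsUnit (f.coeff e0)
    · -- Case III : c0 is a unit, c1 is not, and z0 lies in the support
      have hz0mem : z0 ∈ f.support := by
        by_contra h
        exact hrest h hc0u
      obtain ⟨v, t1, hv, ht1, hc1eq⟩ := hdich2 _ hc1 hc1nu
      obtain ⟨uz0, tz0, huz0, hcz0eq⟩ := hsplit _ ((HahnSeries.mem_support f z0).1 hz0mem)
      have hz0Ev : z0 ∈ EvS := ⟨hz0mem, hz0gt, by rw [hNz0 hz0mem]; exact Even.zero⟩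
      have hz0e0 : z0 ≠ e0 := ne_of_gt hz0gt0
      have hz0e1 : z0 ≠ e1 := ne_of_gt hz0gt
      set αA : G → S := fun g => if g = e0 then f.coeff e0 else if g = e1 then v
        else if g = z0 then tz0 else if g ∈ EvS then f.coeff g else 0 with hαA_def
      have hA0 : ∀ g : G, αA g ≠ 0 → g ∈ f.support := by
        intro g hg
        simp only [hαA_def] at hg
        split_ifs at hg with h1 h2 h3 h4
        · exact h1 ▸ he0mem
        · exact h2 ▸ he1mem
        · exact h3 ▸ hz0mem
        · exact h4.1
        · exact absurd rfl hg
      set A := mk f αA hA0 with hA_def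
      set αB : G → S := fun g => if g = e1 then t1 else if g = z0 then uz0
        else if g ∈ OdS then f.coeff g else 0 with hαB_def
      have hB0 : ∀ g : G, αB g ≠ 0 → g ∈ f.support := by
        intro g hg
        simp only [hαB_def] at hg
        split_ifs at hg with h1 h2 h3
        · exact h1 ▸ he1mem
        · exact h2 ▸ hz0mem
        · exact h3.1
        · exact absurd rfl hg
      set B := mk f αB hB0 with hB_def
      have hAe0 : A.coeff e0 = f.coeff e0 := by
        rw [hA_def, mk_coeff, hαA_def]; simp
      have hAe1 : A.coeff e1 = v := by
        rw [hA_def, mk_coeff, hαA_def]; simp [he1ne0]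
      have hBe1 : B.coeff e1 = t1 := by
        rw [hB_def, mk_coeff, hαB_def]; simp
      have hBz0 : B.coeff z0 = uz0 := by
        rw [hB_def, mk_coeff, hαB_def]; simp [hz0e1]
      have hsum : f = A + B := by
        ext g
        rw [HahnSeries.coeff_add, hA_def, hB_def, mk_coeff, mk_coeff, hαA_def, hαB_def]
        beta_reduce
        by_cases h1 : g = e0
        · subst h1
          rw [if_pos rfl, if_neg (Ne.symm he1ne0), if_neg (Ne.symm hz0e0),
            if_neg he0_not_Od, add_zero]
        by_cases h2 : g = e1
        · subst h2
          rw [if_neg he1ne0, if_pos rfl, if_pos rfl]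
          exact hc1eq
        by_cases h3 : g = z0
        · subst h3
          rw [if_neg hz0e0, if_neg hz0e1, if_pos rfl, if_neg hz0e1, if_pos rfl, hcz0eq,
            add_comm]
        rw [if_neg h1, if_neg h2, if_neg h3, if_neg h2, if_neg h3]
        by_cases hg : g ∈ f.support
        · rcases hsupp_split g hg with h | h | h | h
          · exact absurd h h1
          · exact absurd h h2
          · rw [if_pos h, if_neg (hEv_not_Od g h), add_zero]
          · rw [if_neg (hOd_not_Ev g h), if_pos h, zero_add]
        · have hg0 : f.coeff g = 0 := not_not.1 (fun h => hg h)
          have hge : g ∉ EvS := fun h => hg h.1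
          have hgo : g ∉ OdS := fun h => hg h.1
          rw [hg0, if_neg hge, if_neg hgo, add_zero]
      have hAirr : IrreducibleSeries A := by
        refine summand_irreducible hS hred (mk_inSeries hin) (m0 := e0) (m1 := e1) (W := EvS)
          ?_ ?_ h01 ?_ ?_ ?_ ?_ ?_
        · exact (HahnSeries.mem_support _ _).2 (by rw [hAe0]; exact hc0)
        · exact (HahnSeries.mem_support _ _).2 (by rw [hAe1]; exact hv.ne_zero)
        · intro g hg
          have hg' : αA g ≠ 0 := hg
          simp only [hαA_def] at hg'
          split_ifs at hg' with h1 h2 h3 h4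
          · exact Set.mem_union_left _ (by simp [h1])
          · exact Set.mem_union_left _ (by simp [h2])
          · exact Set.mem_union_right _ (h3 ▸ hz0Ev)
          · exact Set.mem_union_right _ h4
          · exact absurd rfl hg'
        · intro y hy
          exact hy.2.1
        · intro x hx
          rw [← hd_def]
          exact hW4Ev x hx
        · exact Or.inl (by rw [hAe1]; exact (hatoms v).2 hv)
        · exact ⟨e0, by rw [hAe0]; exact hc0u⟩
      have hBirr : IrreducibleSeries B := by
        have hd' : z0 - e1 = d := by rw [hz0_def]; exact add_sub_cancel_left e1 d
        refine summand_irreducible hS hred (mk_inSeries hin) (m0 := e1) (m1 := z0) (W := OdS)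
          ?_ ?_ hz0gt ?_ ?_ ?_ ?_ ?_
        · exact (HahnSeries.mem_support _ _).2 (by rw [hBe1]; exact ht1)
        · exact (HahnSeries.mem_support _ _).2 (by rw [hBz0]; exact huz0.ne_zero)
        · intro g hg
          have hg' : αB g ≠ 0 := hg
          simp only [hαB_def] at hg'
          split_ifs at hg' with h1 h2 h3
          · exact Set.mem_union_left _ (by simp [h1])
          · exact Set.mem_union_left _ (by simp [h2])
          · exact Set.mem_union_right _ h3
          · exact absurd rfl hg'
        · intro y hy
          exact hOd_gt y hy
        · intro x hx
          rw [hd']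
          exact hW4Od x hx
        · exact Or.inl (by rw [hBz0]; exact (hatoms uz0).2 huz0)
        · exact ⟨z0, by rw [hBz0]; exact huz0⟩
      exact pack2 A B hAirr hBirr hsum
    · -- case II : both non-units
      obtain ⟨u, t0, hu, ht0, hc0eq⟩ := hdich2 _ hc0 hc0u
      obtain ⟨u', r, hu', ht0eq⟩ := hsplit t0 ht0
      obtain ⟨v, t1, hv, ht1, hc1eq⟩ := hdich2 _ hc1 hc1nu
      have hur : u + r ≠ 0 := fun h => hu.ne_zero (hred u r h)
      set αA : G → S := fun g => if g = e0 then u + r else if g = e1 then v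
        else if g ∈ EvS then f.coeff g else 0 with hαA_def
      have hA0 : ∀ g : G, αA g ≠ 0 → g ∈ f.support := by
        intro g hg
        simp only [hαA_def] at hg
        split_ifs at hg with h1 h2 h3
        · exact h1 ▸ he0mem
        · exact h2 ▸ he1mem
        · exact h3.1
        · exact absurd rfl hg
      set A := mk f αA hA0 with hA_def
      set αB : G → S := fun g => if g = e0 then u' else if g = e1 then t1
        else if g ∈ OdS then f.coeff g else 0 with hαB_def
      have hB0 : ∀ g : G, αB g ≠ 0 → g ∈ f.support := by
        intro g hg
        simp only [hαB_def] at hg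
        split_ifs at hg with h1 h2 h3
        · exact h1 ▸ he0mem
        · exact h2 ▸ he1mem
        · exact h3.1
        · exact absurd rfl hg
      set B := mk f αB hB0 with hB_def
      have hAe0 : A.coeff e0 = u + r := by
        rw [hA_def, mk_coeff, hαA_def]; simp
      have hAe1 : A.coeff e1 = v := by
        rw [hA_def, mk_coeff, hαA_def]; simp [he1ne0]
      have hBe0 : B.coeff e0 = u' := by
        rw [hB_def, mk_coeff, hαB_def]; simp
      have hBe1 : B.coeff e1 = t1 := by
        rw [hB_def, mk_coeff, hαB_def]; simp [he1ne0]
      have hsum : f = A + B := by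
        ext g
        rw [HahnSeries.coeff_add, hA_def, hB_def, mk_coeff, mk_coeff, hαA_def, hαB_def]
        by_cases h1 : g = e0
        · subst h1
          simp only [eq_self_iff_true, if_true]
          rw [hc0eq, ht0eq]
          ring
        by_cases h2 : g = e1
        · subst h2
          simp only [if_neg he1ne0, eq_self_iff_true, if_true]
          exact hc1eq
        simp only [if_neg h1, if_neg h2]
        by_cases hg : g ∈ f.support
        · rcases hsupp_split g hg with h | h | h | h
          · exact absurd h h1
          · exact absurd h h2
          · rw [if_pos h, if_neg (hEv_not_Od g h), add_zero]
          · rw [if_neg (hOd_not_Ev g h), if_pos h, zero_add]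
        · have hg0 : f.coeff g = 0 := not_not.1 (fun h => hg h)
          have hge : g ∉ EvS := fun h => hg h.1
          have hgo : g ∉ OdS := fun h => hg h.1
          rw [hg0, if_neg hge, if_neg hgo, add_zero]
      have hAirr : IrreducibleSeries A := by
        refine summand_irreducible hS hred (mk_inSeries hin) (m0 := e0) (m1 := e1) (W := EvS)
          ?_ ?_ h01 ?_ ?_ ?_ ?_ ?_
        · exact (HahnSeries.mem_support _ _).2 (by rw [hAe0]; exact hur)
        · exact (HahnSeries.mem_support _ _).2 (by rw [hAe1]; exact hv.ne_zero)
        · intro g hg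
          have hg' : αA g ≠ 0 := hg
          simp only [hαA_def] at hg'
          split_ifs at hg' with h1 h2 h3
          · exact Set.mem_union_left _ (by simp [h1])
          · exact Set.mem_union_left _ (by simp [h2])
          · exact Set.mem_union_right _ h3
          · exact absurd rfl hg'
        · intro y hy
          exact hy.2.1
        · intro x hx
          rw [← hd_def]
          exact hW4Ev x hx
        · exact Or.inl (by rw [hAe1]; exact (hatoms v).2 hv)
        · exact ⟨e1, by rw [hAe1]; exact hv⟩
      have hBirr : IrreducibleSeries B := by
        refine summand_irreducible hS hred (mk_inSeries hin) (m0 := e0) (m1 := e1) (W := OdS)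
          ?_ ?_ h01 ?_ ?_ ?_ ?_ ?_
        · exact (HahnSeries.mem_support _ _).2 (by rw [hBe0]; exact hu'.ne_zero)
        · exact (HahnSeries.mem_support _ _).2 (by rw [hBe1]; exact ht1)
        · intro g hg
          have hg' : αB g ≠ 0 := hg
          simp only [hαB_def] at hg'
          split_ifs at hg' with h1 h2 h3
          · exact Set.mem_union_left _ (by simp [h1])
          · exact Set.mem_union_left _ (by simp [h2])
          · exact Set.mem_union_right _ h3
          · exact absurd rfl hg'
        · intro y hy
          exact hy.2.1
        · intro x hx
          rw [← hd_def]
          exact hW4Od x hx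
        · refine Or.inr ?_
          rw [← hd_def, ← hz0_def]
          intro hmem
          have hg' : (if z0 = e0 then u' else if z0 = e1 then t1
            else if z0 ∈ OdS then f.coeff z0 else 0) ≠ 0 := hmem
          rw [if_neg (ne_of_gt hz0gt0), if_neg (ne_of_gt hz0gt), if_neg hz0_not_Od] at hg'
          exact hg' rfl
        · exact ⟨e0, by rw [hBe0]; exact hu'⟩
      exact pack2 A B hAirr hBirr hsum
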